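/- For m ≥ 2, the element x_m = (1/m!) Σ_{σ ∈ S_m} Σ_{j=0}^{m−1} σ̂(c^{⊠j} ⊠ b ⊠ a^{⊠(m−j−1)}) is the unique S_m-invariant element in Ω^{⊠m} of bidegree (2,−1) satisfying ∂(x) = c^{⊠m} − a^{⊠m}, where S_m acts on Ω^{⊠m} by signed permutation of the factors. -/

import Mathlib

/-
STATEMENT 11: For m ≥ 2, the element
  x_m = (1/m!) Σ_{σ ∈ S_m} Σ_{j=0}^{m-1} σ̂(c^{⊠j} ⊠ b ⊠ a^{⊠(m-j-1)})
is the unique S_m-invariant element of the bidegree (2,−1) part of Ω^{⊠m} (spanned by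
tensors of single letters with exactly one b; here modeled on the basis of functions
Fin m → Fin 3, 0 = a, 1 = b, 2 = c) solving ∂x = c^{⊠m} − a^{⊠m}.  (On this part the
Koszul signs of both the symmetric group action and the differential are as written,
since at most one tensor factor has odd degree.)
-/

noncomputable section

abbrev TensSp (m : ℕ) : Type := (Fin m → Fin 3) →₀ ℝ

def bcount {m : ℕ} (w : Fin m → Fin 3) : ℕ :=
  (Finset.univ.filter (fun i => w i = 1)).card

def bBefore {m : ℕ} (w : Fin m → Fin 3) (i : Fin m) : ℕ :=
  (Finset.univ.filter (fun j => j < i ∧ w j = 1)).card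

/-- the differential on Ω^{⊠m} restricted to tensors of single letters
(Leibniz extension of ∂b = c − a, ∂a = ∂c = 0 with Koszul signs). -/
def delWord {m : ℕ} (w : Fin m → Fin 3) : TensSp m :=
  ∑ i : Fin m,
    if w i = 1 then
      ((-1 : ℝ) ^ (bBefore w i)) •
        (Finsupp.single (Function.update w i 2) (1 : ℝ)
          - Finsupp.single (Function.update w i 0) (1 : ℝ))
    else 0

def tensD (m : ℕ) : TensSp m →ₗ[ℝ] TensSp m :=
  Finsupp.lift (TensSp m) ℝ (Fin m → Fin 3) delWord

/-- the basis tensor c^{⊠j} ⊠ b ⊠ a^{⊠(m-j-1)}. -/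
def cba (m j : ℕ) : Fin m → Fin 3 :=
  fun i => if (i : ℕ) < j then 2 else if (i : ℕ) = j then 1 else 0

/-- the symmetrized element x_m. -/
def xm (m : ℕ) : TensSp m :=
  ((m.factorial : ℝ))⁻¹ •
    ∑ σ : Equiv.Perm (Fin m), ∑ j ∈ Finset.range m,
      Finsupp.single (cba m j ∘ ⇑σ) (1 : ℝ)

/-- the bidegree (2,−1) part: span of the tensors of single letters with exactly one b. -/
def OneB (m : ℕ) : Submodule ℝ (TensSp m) :=
  Submodule.span ℝ
    {f : TensSp m | ∃ w : Fin m → Fin 3, bcount w = 1 ∧ f = Finsupp.single w 1}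

-- my helpers
def ccount {m : ℕ} (w : Fin m → Fin 3) : ℕ :=
  (Finset.univ.filter (fun i => w i = 2)).card

def wc (m k : ℕ) : Fin m → Fin 3 := fun i => if (i : ℕ) < k then 2 else 0

lemma count_comp {m : ℕ} (w : Fin m → Fin 3) (σ : Equiv.Perm (Fin m)) (v : Fin 3) :
    (Finset.univ.filter (fun i => w (σ i) = v)).card
      = (Finset.univ.filter (fun i => w i = v)).card := by
  apply Finset.card_bij (fun i _ => σ i)
  · intro a ha; simp only [Finset.mem_filter, Finset.mem_univ, true_and] at ha ⊢; exact ha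
  · intro a _ b _ h; exact σ.injective h
  · intro b hb
    refine ⟨σ.symm b, ?_, by simp⟩
    simp only [Finset.mem_filter, Finset.mem_univ, true_and, Equiv.apply_symm_apply] at hb ⊢
    exact hb

lemma card_lt (m k : ℕ) (hk : k ≤ m) :
    (Finset.univ.filter (fun i : Fin m => (i : ℕ) < k)).card = k := by
  refine Eq.trans (Finset.card_bij (fun i _ => (i : ℕ)) ?_ ?_ ?_) (Finset.card_range k)
  · intro a ha; simp only [Finset.mem_filter] at ha; simp [ha.2]
  · intro a _ b _ h; exact Fin.ext h
  · intro b hb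
    simp only [Finset.mem_range] at hb
    exact ⟨⟨b, by omega⟩, by simp [hb], rfl⟩

lemma cba_eq_one_iff {m j : ℕ} (hj : j < m) (i : Fin m) : cba m j i = 1 ↔ (i : ℕ) = j := by
  unfold cba
  rcases lt_trichotomy (i : ℕ) j with h | h | h
  · simp [h]; omega
  · simp [h]
  · simp [Nat.lt_asymm h, (by omega : ¬ (i:ℕ) = j)]

lemma bcount_cba {m j : ℕ} (hj : j < m) : bcount (cba m j) = 1 := by
  unfold bcount
  have : (Finset.univ.filter (fun i => cba m j i = 1)) = {(⟨j, hj⟩ : Fin m)} := by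
    ext i
    simp only [Finset.mem_filter, Finset.mem_univ, true_and, Finset.mem_singleton,
      cba_eq_one_iff hj, Fin.ext_iff]
  rw [this, Finset.card_singleton]

lemma ccount_cba {m j : ℕ} (hj : j < m) : ccount (cba m j) = j := by
  unfold ccount
  have : (Finset.univ.filter (fun i => cba m j i = 2))
      = (Finset.univ.filter (fun i : Fin m => (i : ℕ) < j)) := by
    ext i
    simp only [Finset.mem_filter, Finset.mem_univ, true_and]
    unfold cba
    by_cases h1 : (i : ℕ) < j
    · simp [h1]
    · by_cases h2 : (i : ℕ) = j
      · simp [h1, h2]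
      · simp [h1, h2]
  rw [this, card_lt m j (by omega)]

lemma oneB_unique {m : ℕ} {w : Fin m → Fin 3} {i : Fin m} (hw : bcount w = 1) (hi : w i = 1) :
    ∀ j, w j = 1 ↔ j = i := by
  unfold bcount at hw
  obtain ⟨a, ha⟩ := Finset.card_eq_one.mp hw
  have hia : i ∈ Finset.univ.filter (fun i => w i = 1) := by simp [hi]
  rw [ha, Finset.mem_singleton] at hia
  subst hia
  intro j
  constructor
  · intro hj
    have : j ∈ Finset.univ.filter (fun i => w i = 1) := by simp [hj]
    rwa [ha, Finset.mem_singleton] at this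
  · rintro rfl; exact hi

lemma delWord_oneB {m : ℕ} {w : Fin m → Fin 3} {i : Fin m} (hw : bcount w = 1) (hi : w i = 1) :
    delWord w = Finsupp.single (Function.update w i 2) 1
      - Finsupp.single (Function.update w i 0) 1 := by
  have huniq := oneB_unique hw hi
  unfold delWord
  rw [Finset.sum_eq_single i]
  · rw [if_pos hi]
    have hb : bBefore w i = 0 := by
      unfold bBefore
      rw [Finset.card_eq_zero]
      ext j
      simp only [Finset.mem_filter, Finset.mem_univ, true_and, Finset.notMem_empty, iff_false,
        not_and]
      intro hji hwj
      exact absurd ((huniq j).mp hwj) (by rintro rfl; exact lt_irrefl _ hji)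
    rw [hb, pow_zero, one_smul]
  · intro j _ hj
    rw [if_neg]
    intro hwj
    exact hj ((huniq j).mp hwj)
  · intro h; exact absurd (Finset.mem_univ i) h

lemma update_cba_two {m j : ℕ} (hj : j < m) :
    Function.update (cba m j) ⟨j, hj⟩ 2 = wc m (j + 1) := by
  funext i
  rcases eq_or_ne i ⟨j, hj⟩ with rfl | h
  · simp [wc]
  · rw [Function.update_of_ne h]
    have h' : (i : ℕ) ≠ j := fun hc => h (Fin.ext hc)
    unfold cba wc
    by_cases h1 : (i : ℕ) < j
    · simp [h1, (by omega : (i:ℕ) < j + 1)]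
    · rw [if_neg h1, if_neg h', if_neg (by omega : ¬ (i:ℕ) < j + 1)]

lemma update_cba_zero {m j : ℕ} (hj : j < m) :
    Function.update (cba m j) ⟨j, hj⟩ 0 = wc m j := by
  funext i
  rcases eq_or_ne i ⟨j, hj⟩ with rfl | h
  · simp [wc]
  · rw [Function.update_of_ne h]
    have h' : (i : ℕ) ≠ j := fun hc => h (Fin.ext hc)
    unfold cba wc
    by_cases h1 : (i : ℕ) < j
    · simp [h1]
    · simp [h1, h']

lemma bcount_comp {m : ℕ} (w : Fin m → Fin 3) (σ : Equiv.Perm (Fin m)) :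
    bcount (w ∘ σ) = bcount w := count_comp w σ 1

lemma ccount_comp {m : ℕ} (w : Fin m → Fin 3) (σ : Equiv.Perm (Fin m)) :
    ccount (w ∘ σ) = ccount w := count_comp w σ 2

lemma delWord_cba {m j : ℕ} (hj : j < m) (σ : Equiv.Perm (Fin m)) :
    delWord (cba m j ∘ σ)
      = Finsupp.single (wc m (j + 1) ∘ σ) 1 - Finsupp.single (wc m j ∘ σ) 1 := by
  have hb : bcount (cba m j ∘ σ) = 1 := by rw [bcount_comp]; exact bcount_cba hj
  have hi : (cba m j ∘ σ) (σ.symm ⟨j, hj⟩) = 1 := by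
    simp [cba]
  rw [delWord_oneB hb hi]
  have h2 : Function.update (cba m j ∘ ⇑σ) (σ.symm ⟨j, hj⟩) 2 = wc m (j + 1) ∘ ⇑σ := by
    rw [← Function.update_comp_equiv (cba m j) σ, update_cba_two hj]
  have h0 : Function.update (cba m j ∘ ⇑σ) (σ.symm ⟨j, hj⟩) 0 = wc m j ∘ ⇑σ := by
    rw [← Function.update_comp_equiv (cba m j) σ, update_cba_zero hj]
  rw [h2, h0]

lemma tensD_single {m : ℕ} (w : Fin m → Fin 3) :
    tensD m (Finsupp.single w 1) = delWord w := by
  unfold tensD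
  rw [Finsupp.lift_apply, Finsupp.sum_single_index] <;> simp

lemma wc_m (m : ℕ) (σ : Equiv.Perm (Fin m)) : wc m m ∘ ⇑σ = fun _ => (2 : Fin 3) := by
  funext i; simp [wc]

lemma wc_0 (m : ℕ) (σ : Equiv.Perm (Fin m)) : wc m 0 ∘ ⇑σ = fun _ => (0 : Fin 3) := by
  funext i; simp [wc]

lemma tensD_xm (m : ℕ) :
    tensD m (xm m)
      = Finsupp.single (fun _ : Fin m => (2 : Fin 3)) 1
        - Finsupp.single (fun _ : Fin m => (0 : Fin 3)) 1 := by
  unfold xm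
  rw [map_smul, map_sum]
  have hσ : ∀ σ : Equiv.Perm (Fin m),
      tensD m (∑ j ∈ Finset.range m, Finsupp.single (cba m j ∘ ⇑σ) (1 : ℝ))
        = Finsupp.single (fun _ : Fin m => (2 : Fin 3)) 1
          - Finsupp.single (fun _ : Fin m => (0 : Fin 3)) 1 := by
    intro σ
    rw [map_sum]
    have : ∀ j ∈ Finset.range m,
        tensD m (Finsupp.single (cba m j ∘ ⇑σ) (1 : ℝ))
          = Finsupp.single (wc m (j + 1) ∘ ⇑σ) 1 - Finsupp.single (wc m j ∘ ⇑σ) 1 := by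
      intro j hj
      rw [tensD_single, delWord_cba (Finset.mem_range.mp hj)]
    rw [Finset.sum_congr rfl this, Finset.sum_range_sub (fun j => Finsupp.single (wc m j ∘ ⇑σ) 1),
      wc_m, wc_0]
  rw [Finset.sum_congr rfl (fun σ _ => hσ σ), Finset.sum_const, Finset.card_univ]
  rw [Fintype.card_perm, Fintype.card_fin]
  rw [← Nat.cast_smul_eq_nsmul ℝ, smul_smul, inv_mul_cancel₀ (by exact_mod_cast m.factorial_ne_zero),
    one_smul]

lemma xm_invariant (m : ℕ) (σ : Equiv.Perm (Fin m)) :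
    Finsupp.mapDomain (fun w : Fin m → Fin 3 => w ∘ ⇑σ) (xm m) = xm m := by
  unfold xm
  rw [Finsupp.mapDomain_smul, Finsupp.mapDomain_finset_sum]
  congr 1
  have key : ∀ τ : Equiv.Perm (Fin m),
      Finsupp.mapDomain (fun w : Fin m → Fin 3 => w ∘ ⇑σ)
          (∑ j ∈ Finset.range m, Finsupp.single (cba m j ∘ ⇑τ) (1 : ℝ))
        = ∑ j ∈ Finset.range m, Finsupp.single (cba m j ∘ ⇑(τ * σ)) (1 : ℝ) := by
    intro τ
    rw [Finsupp.mapDomain_finset_sum]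
    refine Finset.sum_congr rfl fun j _ => ?_
    rw [Finsupp.mapDomain_single]
    congr 1
  rw [Finset.sum_congr rfl (fun τ _ => key τ)]
  exact Fintype.sum_equiv (Equiv.mulRight σ) _ _ (fun τ => rfl)

lemma xm_mem_OneB (m : ℕ) : xm m ∈ OneB m := by
  unfold xm
  refine Submodule.smul_mem _ _ (Submodule.sum_mem _ fun σ _ => Submodule.sum_mem _ fun j hj => ?_)
  refine Submodule.subset_span ⟨cba m j ∘ ⇑σ, ?_, rfl⟩
  rw [bcount_comp]
  exact bcount_cba (Finset.mem_range.mp hj)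

lemma support_oneB {m : ℕ} {y : TensSp m} (hy : y ∈ OneB m) :
    ∀ w, y w ≠ 0 → bcount w = 1 := by
  have hle : OneB m ≤ Finsupp.supported ℝ ℝ {w : Fin m → Fin 3 | bcount w = 1} := by
    rw [OneB, Submodule.span_le]
    rintro f ⟨w, hw, rfl⟩
    exact Finsupp.single_mem_supported ℝ 1 hw
  intro w hw
  have := Finsupp.mem_supported ℝ y |>.mp (hle hy)
  exact this (Finsupp.mem_support_iff.mpr hw)

lemma inv_apply' {m : ℕ} {y : TensSp m}
    (hinv : ∀ σ : Equiv.Perm (Fin m),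
      Finsupp.mapDomain (fun w : Fin m → Fin 3 => w ∘ ⇑σ) y = y)
    (σ : Equiv.Perm (Fin m)) (w : Fin m → Fin 3) : y (w ∘ ⇑σ) = y w := by
  have hinj : Function.Injective (fun w : Fin m → Fin 3 => w ∘ ⇑σ) := by
    intro a b h
    funext i
    have := congrFun h (σ.symm i)
    simpa using this
  conv_lhs => rw [← hinv σ]
  exact Finsupp.mapDomain_apply hinj y w

lemma counts_sum {m : ℕ} (w : Fin m → Fin 3) :
    (Finset.univ.filter (fun i => w i = 0)).card + bcount w + ccount w = m := by
  unfold bcount ccount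
  rw [← Finset.card_union_of_disjoint, ← Finset.card_union_of_disjoint]
  · have : (Finset.univ.filter (fun i => w i = 0) ∪ Finset.univ.filter (fun i => w i = 1))
        ∪ Finset.univ.filter (fun i => w i = 2) = Finset.univ := by
      ext i
      simp only [Finset.mem_union, Finset.mem_filter, Finset.mem_univ, true_and, iff_true]
      have : ∀ x : Fin 3, x = 0 ∨ x = 1 ∨ x = 2 := by decide
      rcases this (w i) with h | h | h
      · exact Or.inl (Or.inl h)
      · exact Or.inl (Or.inr h)
      · exact Or.inr h
    rw [this, Finset.card_univ, Fintype.card_fin]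
  · simp only [Finset.disjoint_left, Finset.mem_union, Finset.mem_filter, Finset.mem_univ,
      true_and]
    rintro i (h | h) h2 <;> rw [h2] at h <;> exact absurd h (by decide)
  · simp only [Finset.disjoint_left, Finset.mem_filter, Finset.mem_univ, true_and]
    intro i h h1; rw [h1] at h; exact absurd h (by decide)

lemma exists_perm_cba {m : ℕ} {w : Fin m → Fin 3} (hb : bcount w = 1) :
    ccount w < m ∧ ∃ σ : Equiv.Perm (Fin m), w = cba m (ccount w) ∘ ⇑σ := by
  have hsum := counts_sum w
  have hjm : ccount w < m := by omega
  have hsum' := counts_sum (cba m (ccount w))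
  have hb' : bcount (cba m (ccount w)) = 1 := bcount_cba hjm
  have hc' : ccount (cba m (ccount w)) = ccount w := ccount_cba hjm
  have hcard : ∀ v : Fin 3,
      Fintype.card {i // w i = v} = Fintype.card {i // cba m (ccount w) i = v} := by
    intro v
    rw [Fintype.card_subtype, Fintype.card_subtype]
    have h3 : ∀ x : Fin 3, x = 0 ∨ x = 1 ∨ x = 2 := by decide
    rcases h3 v with rfl | rfl | rfl
    · show (Finset.univ.filter (fun i => w i = 0)).card
        = (Finset.univ.filter (fun i => cba m (ccount w) i = 0)).card
      omega
    · show bcount w = bcount (cba m (ccount w))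
      rw [hb, hb']
    · show ccount w = ccount (cba m (ccount w))
      rw [hc']
  refine ⟨hjm, ?_⟩
  refine ⟨(Equiv.ofFiberEquiv (f := w) (g := cba m (ccount w))
    (fun v => Fintype.equivOfCardEq (hcard v))), ?_⟩
  funext i
  exact (Equiv.ofFiberEquiv_map (fun v => Fintype.equivOfCardEq (hcard v)) i).symm

lemma val_orbit {m : ℕ} {y : TensSp m}
    (hinv : ∀ σ : Equiv.Perm (Fin m),
      Finsupp.mapDomain (fun w : Fin m → Fin 3 => w ∘ ⇑σ) y = y)
    {w : Fin m → Fin 3} (hb : bcount w = 1) : y w = y (cba m (ccount w)) := by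
  obtain ⟨hjm, σ, hσ⟩ := exists_perm_cba hb
  have h := inv_apply' hinv σ (cba m (ccount w))
  rw [← hσ] at h
  exact h

lemma wc_ne_one {m k : ℕ} (j : Fin m) : wc m k j ≠ 1 := by
  unfold wc; split <;> decide

lemma bcount_update_wc {m k : ℕ} (i : Fin m) : bcount (Function.update (wc m k) i 1) = 1 := by
  unfold bcount
  have : Finset.univ.filter (fun j => Function.update (wc m k) i 1 j = 1) = {i} := by
    ext j
    simp only [Finset.mem_filter, Finset.mem_univ, true_and, Finset.mem_singleton]
    rcases eq_or_ne j i with rfl | h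
    · simp
    · simp [Function.update_of_ne h, wc_ne_one j, h]
  rw [this, Finset.card_singleton]

lemma update_eq_iff_aux {m k : ℕ} {w : Fin m → Fin 3} {i : Fin m} (hw : w i = 1) (v : Fin 3)
    (h : Function.update w i v = wc m k) : w = Function.update (wc m k) i 1 := by
  funext j
  rcases eq_or_ne j i with rfl | hj
  · simp [hw]
  · rw [Function.update_of_ne hj, ← h, Function.update_of_ne hj]

lemma ccount_update_wc {m k : ℕ} (hk : k ≤ m) (i : Fin m) :
    ccount (Function.update (wc m k) i 1) = if (i : ℕ) < k then k - 1 else k := by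
  unfold ccount
  by_cases hik : (i : ℕ) < k
  · rw [if_pos hik]
    have : Finset.univ.filter (fun j => Function.update (wc m k) i 1 j = 2)
        = (Finset.univ.filter (fun j : Fin m => (j : ℕ) < k)).erase i := by
      ext j
      simp only [Finset.mem_filter, Finset.mem_univ, true_and, Finset.mem_erase]
      rcases eq_or_ne j i with rfl | h
      · simp
      · rw [Function.update_of_ne h]
        unfold wc
        constructor
        · intro h2; split at h2
          · exact ⟨h, by assumption⟩
          · exact absurd h2 (by decide)
        · rintro ⟨-, h2⟩; rw [if_pos h2]
    rw [this, Finset.card_erase_of_mem (by simp [hik]), card_lt m k hk]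
  · rw [if_neg hik]
    have : Finset.univ.filter (fun j => Function.update (wc m k) i 1 j = 2)
        = Finset.univ.filter (fun j : Fin m => (j : ℕ) < k) := by
      ext j
      simp only [Finset.mem_filter, Finset.mem_univ, true_and]
      rcases eq_or_ne j i with rfl | h
      · simp [hik]
      · rw [Function.update_of_ne h]
        unfold wc
        constructor
        · intro h2; split at h2
          · assumption
          · exact absurd h2 (by decide)
        · intro h2; rw [if_pos h2]
    rw [this, card_lt m k hk]

lemma update_wc_eq_self_iff {m k : ℕ} (i : Fin m) (v : Fin 3) :
    Function.update (wc m k) i v = wc m k ↔ wc m k i = v := by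
  constructor
  · intro h
    have := congrFun h i
    rw [Function.update_self] at this
    exact this.symm
  · intro h; rw [← h, Function.update_eq_self]

lemma delWord_update_wc {m k : ℕ} (i : Fin m) :
    delWord (Function.update (wc m k) i 1) (wc m k)
      = if (i : ℕ) < k then 1 else -1 := by
  have hb := bcount_update_wc (m := m) (k := k) i
  have hi : Function.update (wc m k) i 1 i = 1 := Function.update_self i 1 _
  rw [delWord_oneB hb hi]
  rw [Function.update_idem, Function.update_idem]
  rw [Finsupp.sub_apply, Finsupp.single_apply, Finsupp.single_apply]
  by_cases hik : (i : ℕ) < k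
  · rw [if_pos ((update_wc_eq_self_iff i 2).mpr (by unfold wc; rw [if_pos hik])),
      if_neg (fun h => ?_), if_pos hik]
    · ring
    · have := (update_wc_eq_self_iff i 0).mp h
      unfold wc at this; rw [if_pos hik] at this; exact absurd this (by decide)
  · rw [if_neg (fun h => ?_), if_pos ((update_wc_eq_self_iff i 0).mpr (by unfold wc; rw [if_neg hik])),
      if_neg hik]
    · ring
    · have := (update_wc_eq_self_iff i 2).mp h
      unfold wc at this; rw [if_neg hik] at this; exact absurd this (by decide)

lemma tensD_apply_wc {m : ℕ} {z : TensSp m} (hsupp : ∀ w, z w ≠ 0 → bcount w = 1)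
    {k : ℕ} (hk : k ≤ m) :
    (tensD m z) (wc m k)
      = ∑ i : Fin m, z (Function.update (wc m k) i 1) * (if (i : ℕ) < k then 1 else -1) := by
  have hlift : tensD m z = z.sum (fun w c => c • delWord w) := by
    rw [tensD, Finsupp.lift_apply]
  rw [hlift]
  rw [Finsupp.sum, Finsupp.finset_sum_apply]
  have happ : ∀ w, (z w • delWord w) (wc m k) = z w * delWord w (wc m k) := by
    intro w; rw [Finsupp.smul_apply, smul_eq_mul]
  rw [Finset.sum_congr rfl (fun w _ => happ w)]
  set T0 : Finset (Fin m → Fin 3) := Finset.image (fun i => Function.update (wc m k) i 1)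
      Finset.univ with hT0
  have step1 : ∑ w ∈ z.support, z w * delWord w (wc m k)
      = ∑ w ∈ T0, z w * delWord w (wc m k) := by
    have e1 : ∑ w ∈ z.support, z w * delWord w (wc m k)
        = ∑ w ∈ z.support ∪ T0, z w * delWord w (wc m k) := by
      apply Finset.sum_subset Finset.subset_union_left
      intro w _ hw
      rw [Finsupp.notMem_support_iff.mp hw, zero_mul]
    have e2 : ∑ w ∈ T0, z w * delWord w (wc m k)
        = ∑ w ∈ z.support ∪ T0, z w * delWord w (wc m k) := by
      apply Finset.sum_subset Finset.subset_union_right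
      intro w hwu hw2
      have hw1 : w ∈ z.support := (Finset.mem_union.mp hwu).resolve_right hw2
      have hw : w ∈ z.support ∧ w ∉ T0 := ⟨hw1, hw2⟩
      have hb : bcount w = 1 := hsupp w (Finsupp.mem_support_iff.mp hw.1)
      obtain ⟨a, ha⟩ := Finset.card_eq_one.mp hb
      have hia : a ∈ Finset.univ.filter (fun i => w i = 1) := by rw [ha]; exact Finset.mem_singleton_self a
      have hwa : w a = 1 := (Finset.mem_filter.mp hia).2
      have hdel : delWord w (wc m k) = 0 := by
        rw [delWord_oneB hb hwa, Finsupp.sub_apply, Finsupp.single_apply, Finsupp.single_apply]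
        rw [if_neg, if_neg, sub_zero]
        · intro h
          exact hw.2 (hT0 ▸ Finset.mem_image.mpr ⟨a, Finset.mem_univ a, (update_eq_iff_aux hwa 0 h).symm⟩)
        · intro h
          exact hw.2 (hT0 ▸ Finset.mem_image.mpr ⟨a, Finset.mem_univ a, (update_eq_iff_aux hwa 2 h).symm⟩)
      rw [hdel, mul_zero]
    exact e1.trans e2.symm
  rw [step1, hT0, Finset.sum_image ?_]
  · exact Finset.sum_congr rfl fun i _ => by rw [delWord_update_wc]
  · intro a _ b _ h
    have := congrFun h a
    beta_reduce at this
    rw [Function.update_self] at this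
    rcases eq_or_ne a b with h' | h'
    · exact h'
    · rw [Function.update_of_ne h'] at this
      exact absurd this.symm (wc_ne_one a)

lemma card_not_lt (m k : ℕ) (hk : k ≤ m) :
    (Finset.univ.filter (fun i : Fin m => ¬ (i : ℕ) < k)).card = m - k := by
  have h1 := card_lt m k hk
  have h2 : (Finset.univ.filter (fun i : Fin m => (i : ℕ) < k)).card
      + (Finset.univ.filter (fun i : Fin m => ¬ (i : ℕ) < k)).card = m := by
    rw [Finset.card_filter_add_card_filter_not, Finset.card_univ, Fintype.card_fin]
  omega

lemma z_eq_zero {m : ℕ} (hm : 2 ≤ m) {z : TensSp m}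
    (hsupp : ∀ w, z w ≠ 0 → bcount w = 1)
    (hinv : ∀ σ : Equiv.Perm (Fin m),
      Finsupp.mapDomain (fun w : Fin m → Fin 3 => w ∘ ⇑σ) z = z)
    (hz : tensD m z = 0) : z = 0 := by
  set t : ℕ → ℝ := fun j => z (cba m j) with ht
  have key : ∀ k, k ≤ m → (k : ℝ) * t (k - 1) - ((m - k : ℕ) : ℝ) * t k = 0 := by
    intro k hk
    have h0 : (tensD m z) (wc m k) = 0 := by rw [hz]; rfl
    rw [tensD_apply_wc hsupp hk] at h0
    have hterm : ∀ i : Fin m,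
        z (Function.update (wc m k) i 1) * (if (i : ℕ) < k then 1 else -1)
          = if (i : ℕ) < k then t (k - 1) else -(t k) := by
      intro i
      have hv := val_orbit hinv (bcount_update_wc (m := m) (k := k) i)
      rw [ccount_update_wc hk i] at hv
      by_cases hik : (i : ℕ) < k
      · rw [if_pos hik] at hv ⊢; rw [if_pos hik, hv, mul_one]
      · rw [if_neg hik] at hv ⊢; rw [if_neg hik, hv, mul_neg_one]
    rw [Finset.sum_congr rfl (fun i _ => hterm i)] at h0
    rw [Finset.sum_ite, Finset.sum_const, Finset.sum_const, card_lt m k hk,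
      card_not_lt m k hk] at h0
    rw [nsmul_eq_mul, nsmul_eq_mul] at h0
    rw [← h0]
    ring
  have hzero : ∀ k, k < m → t k = 0 := by
    intro k
    induction k with
    | zero =>
      intro _
      have h := key 0 (by omega)
      simp only [Nat.cast_zero, zero_mul, zero_sub, neg_eq_zero, Nat.sub_zero] at h
      rcases mul_eq_zero.mp h with h | h
      · exact absurd h (by positivity)
      · exact h
    | succ k ih =>
      intro hkm
      have h := key (k + 1) (by omega)
      rw [Nat.add_sub_cancel, ih (by omega), mul_zero, zero_sub, neg_eq_zero] at h
      rcases mul_eq_zero.mp h with h | h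
      · exfalso
        have : (0 : ℝ) < ((m - (k+1) : ℕ) : ℝ) := by
          have : 0 < m - (k+1) := by omega
          exact_mod_cast this
        linarith
      · exact h
  ext w
  rw [Finsupp.coe_zero, Pi.zero_apply]
  by_contra hne
  have hb : bcount w = 1 := hsupp w hne
  have hc : ccount w < m := (exists_perm_cba hb).1
  exact hne ((val_orbit hinv hb).trans (hzero (ccount w) hc))

theorem stmt11 (m : ℕ) (hm : 2 ≤ m) :
    -- x_m lies in the bidegree (2,−1) part,
    xm m ∈ OneB m ∧
    -- x_m is S_m-invariant,
    (∀ σ : Equiv.Perm (Fin m),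
      Finsupp.mapDomain (fun w : Fin m → Fin 3 => w ∘ ⇑σ) (xm m) = xm m) ∧
    -- x_m solves ∂x = c^{⊠m} − a^{⊠m},
    tensD m (xm m)
      = Finsupp.single (fun _ : Fin m => (2 : Fin 3)) 1
        - Finsupp.single (fun _ : Fin m => (0 : Fin 3)) 1 ∧
    -- and it is the unique such S_m-invariant element of bidegree (2,−1):
    (∀ y : TensSp m, y ∈ OneB m →
      (∀ σ : Equiv.Perm (Fin m),
        Finsupp.mapDomain (fun w : Fin m → Fin 3 => w ∘ ⇑σ) y = y) →
      tensD m y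
        = Finsupp.single (fun _ : Fin m => (2 : Fin 3)) 1
          - Finsupp.single (fun _ : Fin m => (0 : Fin 3)) 1 →
      y = xm m) := by
  refine ⟨xm_mem_OneB m, xm_invariant m, tensD_xm m, ?_⟩
  intro y hy hinvy hdy
  have hz1 : ∀ w, (y - xm m) w ≠ 0 → bcount w = 1 :=
    support_oneB (Submodule.sub_mem _ hy (xm_mem_OneB m))
  have hz2 : ∀ σ : Equiv.Perm (Fin m),
      Finsupp.mapDomain (fun w : Fin m → Fin 3 => w ∘ ⇑σ) (y - xm m) = y - xm m := by
    intro σ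
    have hsub : Finsupp.mapDomain (fun w : Fin m → Fin 3 => w ∘ ⇑σ) (y - xm m)
        = Finsupp.mapDomain (fun w : Fin m → Fin 3 => w ∘ ⇑σ) y
          - Finsupp.mapDomain (fun w : Fin m → Fin 3 => w ∘ ⇑σ) (xm m) :=
      map_sub (Finsupp.mapDomain.addMonoidHom (fun w : Fin m → Fin 3 => w ∘ ⇑σ)) y (xm m)
    rw [hsub, hinvy σ, xm_invariant m σ]
  have hz3 : tensD m (y - xm m) = 0 := by
    rw [map_sub, hdy, tensD_xm m, sub_self]
  exact sub_eq_zero.mp (z_eq_zero hm hz1 hz2 hz3)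

end
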